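/- Let x, y, x̃, ỹ be nonzero real numbers satisfying Kahan's discretization of the Lotka–Volterra system with time step ε = 1: x̃ - x = x̃ + x - x̃ y - x ỹ and ỹ - y = -ỹ - y + x̃ y + x ỹ. Then: (i) ỹ = x and x̃ y = x(2 - x), so the x-coordinate satisfies the antisymmetric QRT recurrence xₙ₊₁xₙ₋₁ = xₙ(2 - xₙ); (ii) the function Ĥ(x,y) = x²/y² + y²/x² + 4(1/x - 1/y)²(1 - x - y) satisfies Ĥ(x̃, ỹ) = Ĥ(x, y), i.e. Ĥ is an integral of motion of the map. -/

import Mathlib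

/-- Kahan's discrete Lotka–Volterra system with step `ε = 1`: from the
discretization relations one gets `ỹ = x` and `x̃ y = x(2-x)` (the antisymmetric
QRT recurrence), and `Ĥ(x,y) = x²/y² + y²/x² + 4(1/x-1/y)²(1-x-y)` is an
integral of motion. -/
theorem kahan_LV_eps_one (x y x' y' : ℝ)
    (hx : x ≠ 0) (hy : y ≠ 0) (hx' : x' ≠ 0) (hy' : y' ≠ 0)
    (h1 : x' - x = x' + x - x'*y - x*y')
    (h2 : y' - y = -y' - y + x'*y + x*y') :
    y' = x ∧ x'*y = x*(2 - x) ∧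
    x'^2/y'^2 + y'^2/x'^2 + 4*(1/x' - 1/y')^2*(1 - x' - y') =
      x^2/y^2 + y^2/x^2 + 4*(1/x - 1/y)^2*(1 - x - y) := by
  have hyx : y' = x := by linarith
  have hA : x'*y = x*(2 - x) := by linear_combination h1 - x*hyx
  have hz : x*(2 - x) ≠ 0 := hA ▸ mul_ne_zero hx' hy
  have h3 : x' = x*(2 - x)/y := by field_simp; linarith [hA]
  refine ⟨hyx, hA, ?_⟩
  rw [h3, hyx]
  field_simp [right_ne_zero_of_mul hz]
  ring
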